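/- Fix 1 ≤ k ≤ d, m neurons with weights w_r ∈ ℝ^d and second-layer signs a_r ∈ {−1,1}, a real α ≥ 0, and a point x ∈ {−1,1}^d. Say neuron r is good if a_r = ∏_{j=1}^k sign(w_{r,j}) and bad otherwise, and say a good neuron r has sign pattern b ∈ {−1,1}^k if sign(w_{r,j}) = b_j for all j ∈ {1,…,k}. Assume: (i) for every good neuron r and j ∈ {1,…,k}, w_{r,j} ∈ {−1,1}; (ii) |w_{r,j}| ≤ d^{−(k+1)} for every good neuron r and j ∈ {k+1,…,d}, and for every bad neuron r and all j ∈ {1,…,d}; (iii) for every b ∈ {−1,1}^k, the number of good neurons with sign pattern b is at most (1+α)m/2^{k+1}, and the numbers of good and of bad neurons are each at most (1+α)m/2; (iv) |Σ_{j=k+1}^d w_{r,j} x_j| ≤ d^{−k} for every r ∈ {1,…,m}. Then for any second-layer weights a'_1,…,a'_m ∈ ℝ with |a'_r − a_r| ≤ c for all r, | Σ_{r=1}^m a'_r·⟨w_r,x⟩^k − Σ_{r=1}^m a_r·⟨w_r,x⟩^k | ≤ c·( (1+α)·2^{−k}·k^k·(1+e^{−2})^k + 0.5·(1+α)·d^{−k}·k·(k+d^{−k})^k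 + 0.5·(1+α)·(2d^{−k})^k )·m. -/

import Mathlib

open scoped Classical

noncomputable section

/-- ±1 encoding of a Boolean bit. -/
def pm (b : Bool) : ℝ := if b then 1 else -1

/-- Euclidean inner product of a real weight vector with a ±1 input. -/
def ip (d : ℕ) (w : Fin d → ℝ) (x : Fin d → Bool) : ℝ := ∑ i, w i * pm (x i)

/-- Neuron `r` is good: `a_r = ∏_{j=1}^k sign(w_{r,j})`. -/
def goodNeuron (k d m : ℕ) (W : Fin m → Fin d → ℝ) (a : Fin m → Bool) (r : Fin m) : Prop :=
  pm (a r) = ∏ j ∈ Finset.univ.filter (fun j : Fin d => (j : ℕ) < k), Real.sign (W r j)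

/-- Neuron `r` has sign pattern `b ∈ {−1,1}^k`: `sign(w_{r,j}) = b_j` for `j ∈ {1,…,k}`. -/
def hasPattern (k d m : ℕ) (hkd : k ≤ d) (W : Fin m → Fin d → ℝ) (b : Fin k → Bool)
    (r : Fin m) : Prop :=
  ∀ j : Fin k, Real.sign (W r (Fin.castLE hkd j)) = pm (b j)

section Aux

open Finset

lemma pm_abs (b : Bool) : |pm b| = 1 := by cases b <;> simp [pm]

lemma pm_mul_pm (u v : Bool) : pm u * pm v = pm (u == v) := by
  cases u <;> cases v <;> norm_num [pm]

lemma sum_fun_bool_prod (k : ℕ) (g : Bool → ℝ) :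
    ∑ ε : Fin k → Bool, ∏ j, g (ε j) = (g true + g false) ^ k := by
  rw [← Fintype.prod_sum fun (_ : Fin k) (b : Bool) => g b]
  simp [add_comm]

lemma pow_succ_sub_le (a b : ℝ) (ha : 0 ≤ a) (hab : a ≤ b) :
    ∀ n : ℕ, b ^ (n + 1) - a ^ (n + 1) ≤ (n + 1) * (b - a) * b ^ n := by
  intro n
  induction n with
  | zero => simp
  | succ n ih =>
      have hb : 0 ≤ b := ha.trans hab
      have hpow : a ^ (n + 1) ≤ b ^ (n + 1) := pow_le_pow_left₀ ha hab _
      have h1 : b ^ (n + 2) - a ^ (n + 2)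
          = b * (b ^ (n + 1) - a ^ (n + 1)) + (b - a) * a ^ (n + 1) := by ring
      have h2 : b * (b ^ (n + 1) - a ^ (n + 1)) ≤ b * ((n + 1) * (b - a) * b ^ n) :=
        mul_le_mul_of_nonneg_left ih hb
      have h3 : (b - a) * a ^ (n + 1) ≤ (b - a) * b ^ (n + 1) :=
        mul_le_mul_of_nonneg_left hpow (by linarith)
      have h4 : b * ((n + 1) * (b - a) * b ^ n) = ((n:ℝ) + 1) * (b - a) * b ^ (n + 1) := by
        ring
      push_cast
      nlinarith [pow_nonneg hb (n+1)]

lemma pow_add_le (s t K : ℝ) (hs : 0 ≤ s) (ht : 0 ≤ t) (hsK : s ≤ K) (hK : 1 ≤ K)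
    (k : ℕ) (hk : 1 ≤ k) : (s + t) ^ k ≤ s ^ k + k * t * (K + t) ^ k := by
  obtain ⟨n, rfl⟩ : ∃ n, k = n + 1 := ⟨k - 1, (Nat.succ_pred_eq_of_pos hk).symm⟩
  have h1 : (s + t) ^ (n + 1) - s ^ (n + 1) ≤ (n + 1) * t * (s + t) ^ n := by
    have := pow_succ_sub_le s (s + t) hs (by linarith) n
    simpa using this
  have h2 : (s + t) ^ n ≤ (K + t) ^ n := pow_le_pow_left₀ (by linarith) (by linarith) n
  have h3 : (K + t) ^ n ≤ (K + t) ^ (n + 1) := pow_le_pow_right₀ (by linarith) (by omega)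
  have hn : (0:ℝ) ≤ (n + 1) * t := by positivity
  have : ((n:ℝ) + 1) * t * (s + t) ^ n ≤ ((n:ℝ) + 1) * t * (K + t) ^ (n+1) :=
    mul_le_mul_of_nonneg_left (h2.trans h3) hn
  push_cast
  push_cast at h1
  linarith

lemma half_pow_le (i k : ℕ) (hk : 1 ≤ k) (h2i : 2 * i ≤ k) :
    ((k : ℝ) - 2 * i) ^ k ≤ (k : ℝ) ^ k * Real.exp (-(2 * i)) := by
  have hk0 : (0:ℝ) < k := by exact_mod_cast hk
  have hkne : (k:ℝ) ≠ 0 := ne_of_gt hk0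
  have h2i' : (2 * i : ℝ) ≤ k := by exact_mod_cast h2i
  have hnn : (0:ℝ) ≤ (k:ℝ) - 2 * i := by linarith
  have hexp : 1 + (-(2 * i) / k) ≤ Real.exp (-(2 * i) / k) := by
    have := Real.add_one_le_exp (-(2 * (i:ℝ)) / k)
    linarith
  have h1 : (k:ℝ) - 2 * i ≤ k * Real.exp (-(2 * i) / k) := by
    have := mul_le_mul_of_nonneg_left hexp (le_of_lt hk0)
    have heq : (k:ℝ) * (1 + -(2 * i) / k) = k - 2 * i := by field_simp; ring
    linarith [heq ▸ this]
  calc ((k : ℝ) - 2 * i) ^ k ≤ ((k:ℝ) * Real.exp (-(2 * i) / k)) ^ k :=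
        pow_le_pow_left₀ hnn h1 k
    _ = (k:ℝ) ^ k * Real.exp (-(2 * i) / k) ^ k := mul_pow _ _ _
    _ = (k:ℝ) ^ k * Real.exp (-(2 * i)) := by
        rw [← Real.exp_nat_mul]
        congr 1
        field_simp

lemma abs_sub_pow_le (i k : ℕ) (hk : 1 ≤ k) (hik : i ≤ k) :
    |(k : ℝ) - 2 * i| ^ k ≤
      (k : ℝ) ^ k * (Real.exp (-(2 * i)) + Real.exp (-(2 * ((k:ℝ) - i)))) := by
  have hE1 : (0:ℝ) ≤ (k:ℝ) ^ k * Real.exp (-(2 * i)) := by positivity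
  have hE2 : (0:ℝ) ≤ (k:ℝ) ^ k * Real.exp (-(2 * ((k:ℝ) - i))) := by positivity
  rw [mul_add]
  rcases le_or_gt (2 * i) k with h | h
  · have h' : (2 * i : ℝ) ≤ k := by exact_mod_cast h
    rw [abs_of_nonneg (by linarith)]
    have := half_pow_le i k hk h
    push_cast at this ⊢
    linarith
  · have hik2 : 2 * (k - i) ≤ k := by omega
    have h2 := half_pow_le (k - i) k hk hik2
    have hc : ((k - i : ℕ) : ℝ) = (k:ℝ) - i := by
      push_cast [Nat.cast_sub hik]; ring
    rw [hc] at h2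
    have h' : (k:ℝ) < 2 * i := by exact_mod_cast h
    rw [abs_of_neg (by linarith)]
    have heq : (-((k:ℝ) - 2 * i)) = (k:ℝ) - 2 * ((k:ℝ) - i) := by ring
    rw [heq]
    linarith

lemma key_comb (k : ℕ) (hk : 1 ≤ k) :
    ∑ ε : Fin k → Bool, |∑ j, pm (ε j)| ^ k ≤
      2 * (k : ℝ) ^ k * (1 + Real.exp (-2)) ^ k := by
  classical
  set g1 : Bool → ℝ := fun b => if b then 1 else Real.exp (-2) with hg1
  set g2 : Bool → ℝ := fun b => if b then Real.exp (-2) else 1 with hg2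
  have hpoint : ∀ ε : Fin k → Bool,
      |∑ j, pm (ε j)| ^ k ≤ (k:ℝ) ^ k * ((∏ j, g1 (ε j)) + ∏ j, g2 (ε j)) := by
    intro ε
    set i := (univ.filter fun j => ε j = false).card with hi
    set t := (univ.filter fun j => ε j = true).card with htt
    have hfe : (univ.filter fun j : Fin k => ¬ ε j = true)
        = univ.filter fun j => ε j = false := by
      ext j; simp
    have hcards : t + i = k := by
      have := Finset.card_filter_add_card_filter_not
        (s := (univ : Finset (Fin k))) (p := fun j => ε j = true)
      rw [hfe] at this
      simpa using this
    have hik : i ≤ k := by omega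
    have htk : (t : ℝ) = (k : ℝ) - i := by
      have : ((t + i : ℕ) : ℝ) = (k : ℝ) := by rw [hcards]
      push_cast at this; linarith
    have hsum : ∑ j, pm (ε j) = (k:ℝ) - 2 * i := by
      rw [← Finset.sum_filter_add_sum_filter_not univ (fun j => ε j = true)
        (fun j => pm (ε j)), hfe]
      have e1 : ∑ j ∈ univ.filter (fun j : Fin k => ε j = true), pm (ε j) = t := by
        rw [Finset.sum_congr rfl (fun j hj => ?_), Finset.sum_const, nsmul_eq_mul, mul_one]
        simp [pm, (Finset.mem_filter.1 hj).2]
      have e2 : ∑ j ∈ univ.filter (fun j : Fin k => ε j = false), pm (ε j) = -(i:ℝ) := by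
        rw [Finset.sum_congr rfl (fun j hj => ?_), Finset.sum_const, nsmul_eq_mul, mul_neg_one]
        simp [pm, (Finset.mem_filter.1 hj).2]
      rw [e1, e2, htk]; ring
    have hprod1 : ∏ j, g1 (ε j) = Real.exp (-(2 * i)) := by
      rw [← Finset.prod_filter_mul_prod_filter_not univ (fun j => ε j = true)
        (fun j => g1 (ε j)), hfe]
      have e1 : ∏ j ∈ univ.filter (fun j : Fin k => ε j = true), g1 (ε j) = 1 := by
        rw [Finset.prod_congr rfl (fun j hj => ?_), Finset.prod_const, one_pow]
        simp [hg1, (Finset.mem_filter.1 hj).2]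
      have e2 : ∏ j ∈ univ.filter (fun j : Fin k => ε j = false), g1 (ε j)
          = Real.exp (-2) ^ i := by
        rw [Finset.prod_congr rfl (fun j hj => ?_), Finset.prod_const]
        simp [hg1, (Finset.mem_filter.1 hj).2]
      rw [e1, e2, one_mul, ← Real.exp_nat_mul]
      congr 1; push_cast; ring
    have hprod2 : ∏ j, g2 (ε j) = Real.exp (-(2 * ((k:ℝ) - i))) := by
      rw [← Finset.prod_filter_mul_prod_filter_not univ (fun j => ε j = true)
        (fun j => g2 (ε j)), hfe]
      have e1 : ∏ j ∈ univ.filter (fun j : Fin k => ε j = true), g2 (ε j)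
          = Real.exp (-2) ^ t := by
        rw [Finset.prod_congr rfl (fun j hj => ?_), Finset.prod_const]
        simp [hg2, (Finset.mem_filter.1 hj).2]
      have e2 : ∏ j ∈ univ.filter (fun j : Fin k => ε j = false), g2 (ε j) = 1 := by
        rw [Finset.prod_congr rfl (fun j hj => ?_), Finset.prod_const, one_pow]
        simp [hg2, (Finset.mem_filter.1 hj).2]
      rw [e1, e2, mul_one, ← Real.exp_nat_mul, htk]
      congr 1; ring
    rw [hsum, hprod1, hprod2]
    exact abs_sub_pow_le i k hk hik
  calc ∑ ε : Fin k → Bool, |∑ j, pm (ε j)| ^ k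
      ≤ ∑ ε : Fin k → Bool, (k:ℝ) ^ k * ((∏ j, g1 (ε j)) + ∏ j, g2 (ε j)) :=
        Finset.sum_le_sum fun ε _ => hpoint ε
    _ = (k:ℝ) ^ k * ((∑ ε : Fin k → Bool, ∏ j, g1 (ε j))
          + ∑ ε : Fin k → Bool, ∏ j, g2 (ε j)) := by
        rw [← Finset.mul_sum, Finset.sum_add_distrib]
    _ = (k:ℝ) ^ k * ((1 + Real.exp (-2)) ^ k + (Real.exp (-2) + 1) ^ k) := by
        rw [sum_fun_bool_prod, sum_fun_bool_prod]
        simp [hg1, hg2]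
    _ = 2 * (k : ℝ) ^ k * (1 + Real.exp (-2)) ^ k := by
        rw [add_comm (Real.exp (-2)) 1]; ring

end Aux

theorem second_layer_perturbation_bound (k d m : ℕ) (hk : 1 ≤ k) (hkd : k ≤ d)
    (W : Fin m → Fin d → ℝ) (a : Fin m → Bool) (α : ℝ) (hα : 0 ≤ α) (x : Fin d → Bool)
    (h1 : ∀ r : Fin m, goodNeuron k d m W a r →
      ∀ j : Fin d, (j : ℕ) < k → W r j = 1 ∨ W r j = -1)
    (h2g : ∀ r : Fin m, goodNeuron k d m W a r →
      ∀ j : Fin d, k ≤ (j : ℕ) → |W r j| ≤ ((d : ℝ) ^ (k + 1))⁻¹)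
    (h2b : ∀ r : Fin m, ¬ goodNeuron k d m W a r →
      ∀ j : Fin d, |W r j| ≤ ((d : ℝ) ^ (k + 1))⁻¹)
    (h3 : ∀ b : Fin k → Bool,
      ((Finset.univ.filter (fun r : Fin m =>
          goodNeuron k d m W a r ∧ hasPattern k d m hkd W b r)).card : ℝ) ≤
        (1 + α) * m / 2 ^ (k + 1))
    (h3g : ((Finset.univ.filter (fun r : Fin m => goodNeuron k d m W a r)).card : ℝ) ≤
      (1 + α) * m / 2)
    (h3b : ((Finset.univ.filter (fun r : Fin m => ¬ goodNeuron k d m W a r)).card : ℝ) ≤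
      (1 + α) * m / 2)
    (h4 : ∀ r : Fin m,
      |∑ j ∈ Finset.univ.filter (fun j : Fin d => k ≤ (j : ℕ)), W r j * pm (x j)| ≤
        ((d : ℝ) ^ k)⁻¹)
    (c : ℝ) (hc : 0 < c) (a' : Fin m → ℝ) (ha' : ∀ r, |a' r - pm (a r)| ≤ c) :
    |(∑ r, a' r * ip d (W r) x ^ k) - ∑ r, pm (a r) * ip d (W r) x ^ k| ≤
      c * ((1 + α) * ((2 : ℝ) ^ k)⁻¹ * (k : ℝ) ^ k * (1 + Real.exp (-2)) ^ k +
        0.5 * (1 + α) * ((d : ℝ) ^ k)⁻¹ * (k : ℝ) * ((k : ℝ) + ((d : ℝ) ^ k)⁻¹) ^ k +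
        0.5 * (1 + α) * (2 * ((d : ℝ) ^ k)⁻¹) ^ k) * m := by
  classical
  open Finset in
  have hd1 : 1 ≤ d := hk.trans hkd
  have hdpos : (0:ℝ) < d := by exact_mod_cast hd1
  have hα1 : (0:ℝ) ≤ 1 + α := by linarith
  set t : ℝ := ((d : ℝ) ^ k)⁻¹ with htdef
  have ht0 : (0:ℝ) ≤ t := by positivity
  set S : Fin m → ℝ :=
    fun r => ∑ j ∈ Finset.univ.filter (fun j : Fin d => (j:ℕ) < k), W r j * pm (x j) with hS
  set T : Fin m → ℝ :=
    fun r => ∑ j ∈ Finset.univ.filter (fun j : Fin d => k ≤ (j:ℕ)), W r j * pm (x j) with hT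
  have h4' : ∀ r, |T r| ≤ t := fun r => h4 r
  have hipST : ∀ r, ip d (W r) x = S r + T r := by
    intro r
    rw [ip, ← Finset.sum_filter_add_sum_filter_not Finset.univ (fun j : Fin d => (j:ℕ) < k)]
    congr 1
    exact Finset.sum_congr (by ext j; simp [not_lt]) fun _ _ => rfl
  have hmap : Finset.univ.filter (fun j : Fin d => (j:ℕ) < k)
      = (Finset.univ : Finset (Fin k)).map ⟨Fin.castLE hkd, Fin.castLE_injective hkd⟩ := by
    ext j
    simp only [Finset.mem_filter, Finset.mem_map, Finset.mem_univ, true_and,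
      Function.Embedding.coeFn_mk]
    constructor
    · intro hj; exact ⟨⟨(j:ℕ), hj⟩, rfl⟩
    · rintro ⟨i, rfl⟩; exact i.isLt
  have hSmap : ∀ r, S r = ∑ i : Fin k, W r (Fin.castLE hkd i) * pm (x (Fin.castLE hkd i)) := by
    intro r
    show (∑ j ∈ Finset.univ.filter (fun j : Fin d => (j:ℕ) < k), W r j * pm (x j)) = _
    rw [hmap, Finset.sum_map]
    rfl
  -- bad neurons
  have hfiltd : ((Finset.univ.filter (fun j : Fin d => (j:ℕ) < k)).card : ℝ) ≤ d := by
    have h := Finset.card_filter_le (Finset.univ : Finset (Fin d)) (fun j : Fin d => (j:ℕ) < k)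
    simp only [Finset.card_univ, Fintype.card_fin] at h
    exact_mod_cast h
  have hdinv : (d:ℝ) * ((d : ℝ) ^ (k + 1))⁻¹ = t := by
    rw [htdef, pow_succ]
    field_simp
  have hbad : ∀ r, ¬ goodNeuron k d m W a r → |ip d (W r) x| ^ k ≤ (2 * t) ^ k := by
    intro r hr
    have hSb : |S r| ≤ t := by
      calc |S r| ≤ ∑ j ∈ Finset.univ.filter (fun j : Fin d => (j:ℕ) < k),
            |W r j * pm (x j)| := Finset.abs_sum_le_sum_abs _ _
        _ ≤ ∑ j ∈ Finset.univ.filter (fun j : Fin d => (j:ℕ) < k), ((d : ℝ) ^ (k + 1))⁻¹ :=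
            Finset.sum_le_sum fun j _ => by
              rw [abs_mul, pm_abs, mul_one]; exact h2b r hr j
        _ = ((Finset.univ.filter (fun j : Fin d => (j:ℕ) < k)).card : ℝ)
              * ((d : ℝ) ^ (k + 1))⁻¹ := by rw [Finset.sum_const, nsmul_eq_mul]
        _ ≤ (d:ℝ) * ((d : ℝ) ^ (k + 1))⁻¹ :=
            mul_le_mul_of_nonneg_right hfiltd (by positivity)
        _ = t := hdinv
    have habs : |ip d (W r) x| ≤ 2 * t := by
      rw [hipST r]
      calc |S r + T r| ≤ |S r| + |T r| := abs_add_le _ _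
        _ ≤ t + t := add_le_add hSb (h4' r)
        _ = 2 * t := by ring
    exact pow_le_pow_left₀ (abs_nonneg _) habs k
  -- good neurons pointwise
  have hWone : ∀ r, goodNeuron k d m W a r → ∀ i : Fin k, |W r (Fin.castLE hkd i)| = 1 := by
    intro r hr i
    rcases h1 r hr (Fin.castLE hkd i) i.isLt with h | h <;> rw [h] <;> norm_num
  have hSle : ∀ r, goodNeuron k d m W a r → |S r| ≤ (k:ℝ) := by
    intro r hr
    rw [hSmap r]
    calc |∑ i : Fin k, W r (Fin.castLE hkd i) * pm (x (Fin.castLE hkd i))|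
        ≤ ∑ i : Fin k, |W r (Fin.castLE hkd i) * pm (x (Fin.castLE hkd i))| :=
          Finset.abs_sum_le_sum_abs _ _
      _ = ∑ _i : Fin k, (1:ℝ) := Finset.sum_congr rfl fun i _ => by
          rw [abs_mul, pm_abs, mul_one, hWone r hr i]
      _ = (k:ℝ) := by simp
  have hgood : ∀ r, goodNeuron k d m W a r →
      |ip d (W r) x| ^ k ≤ |S r| ^ k + (k:ℝ) * t * ((k:ℝ) + t) ^ k := by
    intro r hr
    have habs : |ip d (W r) x| ≤ |S r| + t := by
      rw [hipST r]
      calc |S r + T r| ≤ |S r| + |T r| := abs_add_le _ _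
        _ ≤ |S r| + t := by linarith [h4' r]
    calc |ip d (W r) x| ^ k ≤ (|S r| + t) ^ k := pow_le_pow_left₀ (abs_nonneg _) habs k
      _ ≤ |S r| ^ k + (k:ℝ) * t * ((k:ℝ) + t) ^ k :=
          pow_add_le _ _ _ (abs_nonneg _) ht0 (hSle r hr) (by exact_mod_cast hk) k hk
  -- patterns
  set P : Fin m → (Fin k → Bool) := fun r i => decide (W r (Fin.castLE hkd i) = 1) with hP
  have hWval : ∀ r, goodNeuron k d m W a r →
      ∀ i : Fin k, W r (Fin.castLE hkd i) = pm (P r i) := by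
    intro r hr i
    rcases h1 r hr (Fin.castLE hkd i) i.isLt with h | h
    · simp [hP, pm, h]
    · have hne : ¬ (W r (Fin.castLE hkd i) = 1) := by rw [h]; norm_num
      norm_num [hP, pm, h]
  set goodset := Finset.univ.filter (fun r : Fin m => goodNeuron k d m W a r) with hgs
  have hfib : ∀ b : Fin k → Bool, goodset.filter (fun r => P r = b)
      ⊆ Finset.univ.filter
        (fun r : Fin m => goodNeuron k d m W a r ∧ hasPattern k d m hkd W b r) := by
    intro b r hr
    obtain ⟨hr1, hr2⟩ := Finset.mem_filter.1 hr
    have hg := (Finset.mem_filter.1 hr1).2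
    refine Finset.mem_filter.2 ⟨Finset.mem_univ _, hg, fun i => ?_⟩
    rw [hWval r hg i, hr2]
    cases b i
    · show Real.sign (pm false) = pm false
      have hpf : pm false = -1 := rfl
      rw [hpf]
      exact Real.sign_of_neg (by norm_num)
    · show Real.sign (pm true) = pm true
      simp [pm, Real.sign_of_pos, zero_lt_one]
  have hSbval : ∀ b : Fin k → Bool, ∀ r ∈ goodset.filter (fun r => P r = b),
      |S r| ^ k = |∑ i : Fin k, pm (b i) * pm (x (Fin.castLE hkd i))| ^ k := by
    intro b r hr
    obtain ⟨hr1, hr2⟩ := Finset.mem_filter.1 hr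
    have hg := (Finset.mem_filter.1 hr1).2
    rw [hSmap r]
    congr 2
    exact Finset.sum_congr rfl fun i _ => by rw [hWval r hg i, hr2]
  have hCnn : (0:ℝ) ≤ (1 + α) * m / 2 ^ (k + 1) :=
    div_nonneg (mul_nonneg hα1 (Nat.cast_nonneg m)) (by positivity)
  have hchange : ∑ b : Fin k → Bool, |∑ i : Fin k, pm (b i) * pm (x (Fin.castLE hkd i))| ^ k
      = ∑ ε : Fin k → Bool, |∑ i, pm (ε i)| ^ k := by
    have hinv : Function.Involutive
        (fun (b : Fin k → Bool) => fun i => b i == x (Fin.castLE hkd i)) := fun b => by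
      funext i
      cases hbi : b i <;> cases hxi : x (Fin.castLE hkd i) <;> simp [hbi, hxi]
    refine Fintype.sum_bijective _ hinv.bijective _ _ fun b => ?_
    simp_rw [pm_mul_pm]
  have hgoodS : ∑ r ∈ goodset, |S r| ^ k
      ≤ (1 + α) * m / 2 ^ (k + 1) * (2 * (k:ℝ) ^ k * (1 + Real.exp (-2)) ^ k) := by
    rw [← Finset.sum_fiberwise_of_maps_to (g := P)
      (fun r _ => Finset.mem_univ (P r)) (fun r => |S r| ^ k)]
    have hb : ∀ b : Fin k → Bool, ∑ r ∈ goodset.filter (fun r => P r = b), |S r| ^ k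
        ≤ (1 + α) * m / 2 ^ (k + 1)
          * |∑ i : Fin k, pm (b i) * pm (x (Fin.castLE hkd i))| ^ k := by
      intro b
      rw [Finset.sum_congr rfl (hSbval b), Finset.sum_const, nsmul_eq_mul]
      refine mul_le_mul_of_nonneg_right ?_ (by positivity)
      calc ((goodset.filter (fun r => P r = b)).card : ℝ)
          ≤ ((Finset.univ.filter (fun r : Fin m =>
              goodNeuron k d m W a r ∧ hasPattern k d m hkd W b r)).card : ℝ) := by
            exact_mod_cast Finset.card_le_card (hfib b)
        _ ≤ (1 + α) * m / 2 ^ (k + 1) := h3 b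
    calc ∑ b : Fin k → Bool, ∑ r ∈ goodset.filter (fun r => P r = b), |S r| ^ k
        ≤ ∑ b : Fin k → Bool, (1 + α) * m / 2 ^ (k + 1)
            * |∑ i : Fin k, pm (b i) * pm (x (Fin.castLE hkd i))| ^ k :=
          Finset.sum_le_sum fun b _ => hb b
      _ = (1 + α) * m / 2 ^ (k + 1)
            * ∑ b : Fin k → Bool, |∑ i : Fin k, pm (b i) * pm (x (Fin.castLE hkd i))| ^ k :=
          (Finset.mul_sum _ _ _).symm
      _ ≤ (1 + α) * m / 2 ^ (k + 1) * (2 * (k:ℝ) ^ k * (1 + Real.exp (-2)) ^ k) := by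
          refine mul_le_mul_of_nonneg_left ?_ hCnn
          rw [hchange]
          exact key_comb k hk
  -- assemble
  have hgoodsum : ∑ r ∈ goodset, |ip d (W r) x| ^ k
      ≤ (1 + α) * m / 2 ^ (k + 1) * (2 * (k:ℝ) ^ k * (1 + Real.exp (-2)) ^ k)
        + (1 + α) * m / 2 * ((k:ℝ) * t * ((k:ℝ) + t) ^ k) := by
    calc ∑ r ∈ goodset, |ip d (W r) x| ^ k
        ≤ ∑ r ∈ goodset, (|S r| ^ k + (k:ℝ) * t * ((k:ℝ) + t) ^ k) :=
          Finset.sum_le_sum fun r hr => hgood r (Finset.mem_filter.1 hr).2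
      _ = (∑ r ∈ goodset, |S r| ^ k) + (goodset.card : ℝ) * ((k:ℝ) * t * ((k:ℝ) + t) ^ k) := by
          rw [Finset.sum_add_distrib, Finset.sum_const, nsmul_eq_mul]
      _ ≤ (1 + α) * m / 2 ^ (k + 1) * (2 * (k:ℝ) ^ k * (1 + Real.exp (-2)) ^ k)
            + (1 + α) * m / 2 * ((k:ℝ) * t * ((k:ℝ) + t) ^ k) :=
          add_le_add hgoodS (mul_le_mul_of_nonneg_right h3g (by positivity))
  have hbadsum : ∑ r ∈ Finset.univ.filter (fun r : Fin m => ¬ goodNeuron k d m W a r),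
      |ip d (W r) x| ^ k ≤ (1 + α) * m / 2 * ((2 * t) ^ k) := by
    calc ∑ r ∈ Finset.univ.filter (fun r : Fin m => ¬ goodNeuron k d m W a r),
          |ip d (W r) x| ^ k
        ≤ ∑ _r ∈ Finset.univ.filter (fun r : Fin m => ¬ goodNeuron k d m W a r), (2 * t) ^ k :=
          Finset.sum_le_sum fun r hr => hbad r (Finset.mem_filter.1 hr).2
      _ = ((Finset.univ.filter (fun r : Fin m => ¬ goodNeuron k d m W a r)).card : ℝ)
            * (2 * t) ^ k := by rw [Finset.sum_const, nsmul_eq_mul]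
      _ ≤ (1 + α) * m / 2 * ((2 * t) ^ k) :=
          mul_le_mul_of_nonneg_right h3b (by positivity)
  have hmain : ∑ r, |ip d (W r) x| ^ k ≤
      ((1 + α) * ((2 : ℝ) ^ k)⁻¹ * (k : ℝ) ^ k * (1 + Real.exp (-2)) ^ k +
        0.5 * (1 + α) * t * (k : ℝ) * ((k : ℝ) + t) ^ k +
        0.5 * (1 + α) * (2 * t) ^ k) * m := by
    rw [← Finset.sum_filter_add_sum_filter_not Finset.univ
      (fun r : Fin m => goodNeuron k d m W a r) (fun r => |ip d (W r) x| ^ k)]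
    refine (add_le_add hgoodsum hbadsum).trans (le_of_eq ?_)
    have h2k : ((2:ℝ) ^ k) ≠ 0 := by positivity
    rw [pow_succ]
    field_simp
    ring
  have hstep1 : |(∑ r, a' r * ip d (W r) x ^ k) - ∑ r, pm (a r) * ip d (W r) x ^ k|
      ≤ c * ∑ r, |ip d (W r) x| ^ k := by
    rw [← Finset.sum_sub_distrib]
    calc |∑ r, (a' r * ip d (W r) x ^ k - pm (a r) * ip d (W r) x ^ k)|
        ≤ ∑ r, |a' r * ip d (W r) x ^ k - pm (a r) * ip d (W r) x ^ k| :=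
          Finset.abs_sum_le_sum_abs _ _
      _ ≤ ∑ r, c * |ip d (W r) x| ^ k := Finset.sum_le_sum fun r _ => by
          rw [← sub_mul, abs_mul, abs_pow]
          exact mul_le_mul_of_nonneg_right (ha' r) (by positivity)
      _ = c * ∑ r, |ip d (W r) x| ^ k := (Finset.mul_sum _ _ _).symm
  calc |(∑ r, a' r * ip d (W r) x ^ k) - ∑ r, pm (a r) * ip d (W r) x ^ k|
      ≤ c * ∑ r, |ip d (W r) x| ^ k := hstep1
    _ ≤ c * (((1 + α) * ((2 : ℝ) ^ k)⁻¹ * (k : ℝ) ^ k * (1 + Real.exp (-2)) ^ k +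
          0.5 * (1 + α) * t * (k : ℝ) * ((k : ℝ) + t) ^ k +
          0.5 * (1 + α) * (2 * t) ^ k) * m) := mul_le_mul_of_nonneg_left hmain hc.le
    _ = c * ((1 + α) * ((2 : ℝ) ^ k)⁻¹ * (k : ℝ) ^ k * (1 + Real.exp (-2)) ^ k +
          0.5 * (1 + α) * t * (k : ℝ) * ((k : ℝ) + t) ^ k +
          0.5 * (1 + α) * (2 * t) ^ k) * m := by ring
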